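/- Given a 3-LieDer pair (L, φ_L), an abelian 3-LieDer pair (M, φ_M), a skew trilinear map ψ: ∧³L → M, and a linear map χ: L → M, the space L ⊕ M with bracket [(x,m),(y,n),(z,p)]_ψ = ([x,y,z], ψ(x,y,z)) and map φ(x,m) = (φ_L(x), φ_M(m) + χ(x)) is a 3-LieDer pair if and only if (ψ, χ) is a 2-cocycle in the 3-LieDer pair cohomology with trivial coefficients, i.e., ψ(x,y,[z,v,w]) = ψ([x,y,z],v,w) + ψ(z,[x,y,v],w) + ψ(z,v,[x,y,w]) and φ_M(ψ(x,y,z)) + χ([x,y,z]) = ψ(φ_L(x),y,z) + ψ(x,φ_L(y),z) + ψ(x,y,φ_L(z)). -/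

import Mathlib

/-- A 3-Lie algebra: a module with a trilinear skew-symmetric bracket satisfying
the fundamental (Filippov) identity. -/
structure ThreeLieAlgebra (K L : Type) [Field K] [AddCommGroup L] [Module K L] where
  br : L →ₗ[K] L →ₗ[K] L →ₗ[K] L
  skew₁₂ : ∀ x y z, br x y z = - br y x z
  skew₂₃ : ∀ x y z, br x y z = - br x z y
  fund : ∀ x y u v w,
    br x y (br u v w) = br (br x y u) v w + br u (br x y v) w + br u v (br x y w)

/-- A derivation of a 3-Lie algebra. -/
def IsDer {K L : Type} [Field K] [AddCommGroup L] [Module K L]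
    (A : ThreeLieAlgebra K L) (φ : L →ₗ[K] L) : Prop :=
  ∀ x y z, φ (A.br x y z) = A.br (φ x) y z + A.br x (φ y) z + A.br x y (φ z)

/-- The candidate bracket on `L × M`. -/
def extBr {K L M : Type} [Field K] [AddCommGroup L] [Module K L] [AddCommGroup M] [Module K M]
    (A : ThreeLieAlgebra K L) (ψ : L →ₗ[K] L →ₗ[K] L →ₗ[K] M) :
    (L × M) →ₗ[K] (L × M) →ₗ[K] (L × M) →ₗ[K] (L × M) where
  toFun := fun a =>
  { toFun := fun b =>
    { toFun := fun c => (A.br a.1 b.1 c.1, ψ a.1 b.1 c.1)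
      map_add' := by intro c c'; simp [Prod.ext_iff]
      map_smul' := by intro r c; simp [Prod.ext_iff, Prod.smul_def] }
    map_add' := by intro b b'; ext c <;> simp
    map_smul' := by intro r b; ext c <;> simp [Prod.smul_def] }
  map_add' := by intro a a'; ext c <;> simp
  map_smul' := by intro r a; ext c <;> simp [Prod.smul_def]

@[simp] lemma extBr_apply {K L M : Type} [Field K] [AddCommGroup L] [Module K L]
    [AddCommGroup M] [Module K M]
    (A : ThreeLieAlgebra K L) (ψ : L →ₗ[K] L →ₗ[K] L →ₗ[K] M)
    (a b c : L × M) : extBr A ψ a b c = (A.br a.1 b.1 c.1, ψ a.1 b.1 c.1) := rfl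

/-- `L ⊕ M` with bracket `([x,y,z], ψ(x,y,z))` and map
`(x,m) ↦ (φ_L x, φ_M m + χ x)` is a 3-LieDer pair iff `(ψ, χ)` is a 2-cocycle
of the 3-LieDer pair `(L, φ_L)` with trivial coefficients in `M`. -/
theorem extension_iff_two_cocycle
    (K L M : Type) [Field K] [AddCommGroup L] [Module K L] [AddCommGroup M] [Module K M]
    (A : ThreeLieAlgebra K L) (φL : L →ₗ[K] L) (hφL : IsDer A φL)
    (φM : M →ₗ[K] M)
    (ψ : L →ₗ[K] L →ₗ[K] L →ₗ[K] M)
    (hψ₁₂ : ∀ x y z, ψ x y z = - ψ y x z)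
    (hψ₂₃ : ∀ x y z, ψ x y z = - ψ x z y)
    (χ : L →ₗ[K] M) :
    (∃ B : ThreeLieAlgebra K (L × M),
      (∀ (x y z : L) (m n p : M),
        B.br (x, m) (y, n) (z, p) = (A.br x y z, ψ x y z)) ∧
      IsDer B (LinearMap.prod (φL ∘ₗ LinearMap.fst K L M)
        (φM ∘ₗ LinearMap.snd K L M + χ ∘ₗ LinearMap.fst K L M)))
    ↔ ((∀ x y z v w : L,
          ψ x y (A.br z v w)
            = ψ (A.br x y z) v w + ψ z (A.br x y v) w + ψ z v (A.br x y w)) ∧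
        (∀ x y z : L,
          φM (ψ x y z) + χ (A.br x y z)
            = ψ (φL x) y z + ψ x (φL y) z + ψ x y (φL z))) := by
  constructor
  · rintro ⟨B, hbr, hder⟩
    constructor
    · intro x y z v w
      have h := B.fund (x, 0) (y, 0) (z, 0) (v, 0) (w, 0)
      simp only [hbr] at h
      have h2 := congrArg Prod.snd h
      simpa [hbr] using h2
    · intro x y z
      have h := hder (x, 0) (y, 0) (z, 0)
      simp only [hbr] at h
      have h2 := congrArg Prod.snd h
      simpa [hbr] using h2
  · rintro ⟨hc1, hc2⟩
    refine ⟨⟨extBr A ψ, ?_, ?_, ?_⟩, fun x y z m n p => rfl, ?_⟩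
    · intro a b c
      simp [Prod.ext_iff, A.skew₁₂ a.1 b.1 c.1, hψ₁₂ a.1 b.1 c.1]
    · intro a b c
      simp [Prod.ext_iff, A.skew₂₃ a.1 b.1 c.1, hψ₂₃ a.1 b.1 c.1]
    · intro a b u v w
      simp only [extBr_apply, Prod.mk_add_mk, Prod.mk.injEq]
      exact ⟨A.fund a.1 b.1 u.1 v.1 w.1, hc1 a.1 b.1 u.1 v.1 w.1⟩
    · intro a b c
      have h2 := hc2 a.1 b.1 c.1
      simp only [extBr_apply, LinearMap.prod_apply, LinearMap.add_apply,
        LinearMap.comp_apply, LinearMap.fst_apply, LinearMap.snd_apply,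
        Function.prod, Prod.mk_add_mk, Prod.mk.injEq]
      exact ⟨hφL a.1 b.1 c.1, h2⟩
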